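/- Set π_{n,k} := 2(n+1)/((n−1)(k+1)(k+2)), A(n,k) := 4(n+1)(n−k−1)/((n−1)(n−2)(k+1)(k+2)(k+3)) and B(n,k) := 16(n+1)(n−k−1)(n−k−2)/((n−1)(n−2)(n−3)(k+1)(k+2)(k+3)(k+4)). Then for all integers n ≥ 4 and 1 ≤ k ≤ n−1: C(n,2)^{−1}·π_{n,k} + 2(n−2)·C(n,2)^{−1}·A(n,k) + C(n−2,2)·C(n,2)^{−1}·B(n,k) − π_{n,k}² = 4(n+1)(n−k−1)·(n(3k²+5k−4) − (k³+k²+2k+8)) / (n(n−1)²(k+1)²(k+2)²(k+3)(k+4)). Moreover, for each fixed integer k ≥ 1, this quantity converges, as n → ∞, to 4(3k²+5k−4)/((k+1)²(k+2)²(k+3)(k+4)). -/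
import Mathlib


open Filter

/-- `π_{n,k}`: probability that a random pair of tips coalesced at the `k`-th speciation
event of a Yule tree with `n` tips. -/
noncomputable def piProb (n k : ℝ) : ℝ := 2 * (n + 1) / ((n - 1) * (k + 1) * (k + 2))

/-- Case (ii) probability: two pairs sharing one tip both coalesce at event `k`. -/
noncomputable def caseII (n k : ℝ) : ℝ :=
  4 * (n + 1) * (n - k - 1) / ((n - 1) * (n - 2) * (k + 1) * (k + 2) * (k + 3))

/-- Case (iii) probability: two disjoint pairs both coalesce at event `k`. -/
noncomputable def caseIII (n k : ℝ) : ℝ :=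
  16 * (n + 1) * (n - k - 1) * (n - k - 2) /
    ((n - 1) * (n - 2) * (n - 3) * (k + 1) * (k + 2) * (k + 3) * (k + 4))

/-- `Var(E[1_k^{(n)} | 𝒴_n])` in closed form. -/
noncomputable def varCond1k (n k : ℝ) : ℝ :=
  4 * (n + 1) * (n - k - 1) * (n * (3 * k ^ 2 + 5 * k - 4) - (k ^ 3 + k ^ 2 + 2 * k + 8)) /
    (n * (n - 1) ^ 2 * (k + 1) ^ 2 * (k + 2) ^ 2 * (k + 3) * (k + 4))

/-- The variance of the conditional coalescent probability of a Yule tree with `n` tips,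
in closed form, together with its limit as `n → ∞`. -/
theorem stmt3 :
    (∀ n k : ℕ, 4 ≤ n → 1 ≤ k → k ≤ n - 1 →
      ((n : ℝ) * ((n : ℝ) - 1) / 2)⁻¹ * piProb n k
        + 2 * ((n : ℝ) - 2) * ((n : ℝ) * ((n : ℝ) - 1) / 2)⁻¹ * caseII n k
        + (((n : ℝ) - 2) * ((n : ℝ) - 3) / 2) * ((n : ℝ) * ((n : ℝ) - 1) / 2)⁻¹ * caseIII n k
        - (piProb n k) ^ 2
      = varCond1k n k) ∧
    (∀ k : ℕ, 1 ≤ k →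
      Tendsto (fun n : ℕ => varCond1k n k) atTop
        (nhds (4 * (3 * (k : ℝ) ^ 2 + 5 * k - 4) /
          (((k : ℝ) + 1) ^ 2 * ((k : ℝ) + 2) ^ 2 * ((k : ℝ) + 3) * ((k : ℝ) + 4))))) := by
  constructor
  · intro n k hn hk _
    have hn4 : (4 : ℝ) ≤ (n : ℝ) := by exact_mod_cast hn
    have hk1 : (1 : ℝ) ≤ (k : ℝ) := by exact_mod_cast hk
    have h0 : (n : ℝ) ≠ 0 := by linarith
    have h1 : (n : ℝ) - 1 ≠ 0 := by linarith
    have h2 : (n : ℝ) - 2 ≠ 0 := by linarith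
    have h3 : (n : ℝ) - 3 ≠ 0 := by linarith
    have k1 : (k : ℝ) + 1 ≠ 0 := by linarith
    have k2 : (k : ℝ) + 2 ≠ 0 := by linarith
    have k3 : (k : ℝ) + 3 ≠ 0 := by linarith
    have k4 : (k : ℝ) + 4 ≠ 0 := by linarith
    unfold piProb caseII caseIII varCond1k
    field_simp
    ring
  · intro k _
    have k0 : (0 : ℝ) ≤ (k : ℝ) := Nat.cast_nonneg k
    have k1 : (k : ℝ) + 1 ≠ 0 := by linarith
    have k2 : (k : ℝ) + 2 ≠ 0 := by linarith
    have k3 : (k : ℝ) + 3 ≠ 0 := by linarith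
    have k4 : (k : ℝ) + 4 ≠ 0 := by linarith
    set K : ℝ := ((k : ℝ) + 1) ^ 2 * ((k : ℝ) + 2) ^ 2 * ((k : ℝ) + 3) * ((k : ℝ) + 4) with hK
    have hKne : K ≠ 0 := by
      simp only [hK]
      positivity
    set a : ℝ := 3 * (k : ℝ) ^ 2 + 5 * k - 4 with ha
    set c : ℝ := (k : ℝ) ^ 3 + (k : ℝ) ^ 2 + 2 * k + 8 with hc
    set F : ℝ → ℝ := fun x =>
      4 * (1 + x) * (1 - ((k : ℝ) + 1) * x) * (a - c * x) / ((1 - x) ^ 2 * K) with hF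
    have hcont : ContinuousAt F 0 := by
      apply ContinuousAt.div
      · fun_prop
      · fun_prop
      · simp [hKne]
    have hlim : Tendsto (fun n : ℕ => F (1 / (n : ℝ))) atTop (nhds (F 0)) :=
      (hcont.tendsto).comp tendsto_one_div_atTop_nhds_zero_nat
    have hF0 : F 0 = 4 * (3 * (k : ℝ) ^ 2 + 5 * k - 4) /
        (((k : ℝ) + 1) ^ 2 * ((k : ℝ) + 2) ^ 2 * ((k : ℝ) + 3) * ((k : ℝ) + 4)) := by
      simp [hF, ha, hK]
    rw [← hF0]
    refine hlim.congr' ?_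
    filter_upwards [eventually_ge_atTop 2] with n hn
    have hn2 : (2 : ℝ) ≤ (n : ℝ) := by exact_mod_cast hn
    have h0 : (n : ℝ) ≠ 0 := by linarith
    have h1 : (n : ℝ) - 1 ≠ 0 := by linarith
    have h1' : 1 - 1 / (n : ℝ) ≠ 0 := by
      rw [sub_ne_zero]
      intro h
      have : (n : ℝ) = 1 := by field_simp at h; linarith
      linarith
    simp only [hF]
    rw [varCond1k, hK, ha, hc]
    field_simp
    ring
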